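/- Let n ≥ 10^6. Let d_t ~ Bin(n, p_t) with ξ_t = min(μ_t, n−μ_t) ≥ 8200·ln n, and let d_k ~ Bin(n, p_k) with μ_k ≤ μ_t. Let ℓ ∈ {0, 1, 2} and let h be an integer such that h ∈ Z_t and h − 2 ∈ Z_k. Then Pr[d_k = h − ℓ] ≤ 264·e·√(ln n / ξ_t) · Pr[d_k > h]. -/

import Mathlib

open Real Finset


/-- The probability mass function of the binomial distribution `Bin(n, p)`:
`Pr[B = k] = C(n,k) p^k (1-p)^(n-k)`. -/
noncomputable def binomPMF (n : ℕ) (p : ℝ) (k : ℕ) : ℝ :=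
  (n.choose k : ℝ) * p ^ k * (1 - p) ^ (n - k)

/-- `Pr[B > c]` for `B ~ Bin(n, p)`. -/
noncomputable def prGT (n : ℕ) (p : ℝ) (c : ℕ) : ℝ :=
  ∑ k ∈ Finset.Icc (c + 1) n, binomPMF n p k

/-- `Pr[B < c]` for `B ~ Bin(n, p)`. -/
noncomputable def prLT (n : ℕ) (p : ℝ) (c : ℕ) : ℝ :=
  ∑ k ∈ Finset.range c, binomPMF n p k

/-- The upper boundary `U` of the comfort zone: the smallest integer `c` with
`Pr[B > c] ≤ n^(−5.33)` (such a `c ≤ n` always exists). -/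
noncomputable def Ubound (n : ℕ) (p : ℝ) : ℕ :=
  sInf {c : ℕ | prGT n p c ≤ (n : ℝ) ^ (-(5.33 : ℝ))}

/-- The lower boundary `L` of the comfort zone: the largest integer `c` with
`Pr[B < c] ≤ n^(−5.33)` (and `c = 0` always satisfies this). -/
noncomputable def Lbound (n : ℕ) (p : ℝ) : ℕ :=
  sSup {c : ℕ | prLT n p c ≤ (n : ℝ) ^ (-(5.33 : ℝ))}

lemma binomPMF_nonneg {n k : ℕ} {p : ℝ} (h0 : 0 ≤ p) (h1 : p ≤ 1) :
    0 ≤ binomPMF n p k := by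
  unfold binomPMF
  have : (0:ℝ) ≤ 1 - p := by linarith
  have c : (0:ℝ) ≤ (n.choose k : ℝ) := Nat.cast_nonneg _
  exact mul_nonneg (mul_nonneg c (pow_nonneg h0 _)) (pow_nonneg this _)

lemma sum_tilted (n : ℕ) (x y : ℝ) :
    ∑ j ∈ range (n+1), (n.choose j : ℝ) * x ^ j * y ^ (n-j) = (x + y) ^ n := by
  rw [add_pow]
  exact Finset.sum_congr rfl (fun j _ => by ring)

lemma mgf_ub (n a : ℕ) (p t : ℝ) (h0 : 0 ≤ p) (h1 : p ≤ 1) (ht : 0 ≤ t) :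
    ∑ j ∈ Icc a n, binomPMF n p j ≤ exp (p * n * (exp t - 1) - t * a) := by
  have hq : (0:ℝ) ≤ 1 - p := by linarith
  have step1 : ∑ j ∈ Icc a n, binomPMF n p j
      ≤ ∑ j ∈ range (n+1), (n.choose j : ℝ) * (p * exp t) ^ j * (1-p) ^ (n-j) * exp (-(t*a)) := by
    have hsub : Icc a n ⊆ range (n+1) := by
      intro j hj; simp only [mem_Icc] at hj; simp only [mem_range]; omega
    refine le_trans ?_ (Finset.sum_le_sum_of_subset_of_nonneg hsub ?_)
    · apply Finset.sum_le_sum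
      intro j hj
      simp only [mem_Icc] at hj
      have h1' : binomPMF n p j ≤ binomPMF n p j * exp (t * (j - a)) := by
        nth_rewrite 1 [← mul_one (binomPMF n p j)]
        apply mul_le_mul_of_nonneg_left _ (binomPMF_nonneg h0 h1)
        rw [← Real.exp_zero]
        apply Real.exp_le_exp.mpr
        have : (a:ℝ) ≤ j := by exact_mod_cast hj.1
        nlinarith
      refine h1'.trans (le_of_eq ?_)
      unfold binomPMF
      rw [mul_pow, ← Real.exp_nat_mul]
      rw [show t * ((j:ℝ) - a) = t * j + (-(t*a)) by ring, Real.exp_add]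
      rw [show (j:ℝ) * t = t * j by ring]
      ring
    · intro j _ _
      have := Real.exp_pos (-(t*a))
      have h2 : (0:ℝ) ≤ p * exp t := by positivity
      positivity
  rw [← Finset.sum_mul, sum_tilted] at step1
  refine step1.trans ?_
  have hbase : p * exp t + (1 - p) ≤ exp (p * (exp t - 1)) := by
    have := Real.add_one_le_exp (p * (exp t - 1))
    linarith
  have hbase0 : (0:ℝ) ≤ p * exp t + (1 - p) := by
    have := Real.exp_pos t
    nlinarith
  calc (p * exp t + (1-p)) ^ n * exp (-(t*a))
      ≤ exp (p * (exp t - 1)) ^ n * exp (-(t*a)) := by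
        apply mul_le_mul_of_nonneg_right _ (Real.exp_pos _).le
        exact pow_le_pow_left₀ hbase0 hbase n
    _ = exp (p * n * (exp t - 1) - t * a) := by
        rw [← Real.exp_nat_mul, ← Real.exp_add]
        congr 1; ring

lemma binomPMF_zero_of_lt {n k : ℕ} (h : n < k) (p : ℝ) : binomPMF n p k = 0 := by
  unfold binomPMF
  rw [Nat.choose_eq_zero_of_lt h]
  simp

lemma mgf_lb (n a : ℕ) (p t : ℝ) (h0 : 0 ≤ p) (h1 : p ≤ 1) (ht : 0 ≤ t) :
    ∑ j ∈ range (a+1), binomPMF n p j ≤ exp (p * n * (exp (-t) - 1) + t * a) := by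
  have hq : (0:ℝ) ≤ 1 - p := by linarith
  have step1 : ∑ j ∈ range (a+1), binomPMF n p j
      ≤ ∑ j ∈ range (a+1), (n.choose j : ℝ) * (p * exp (-t)) ^ j * (1-p) ^ (n-j) * exp (t*a) := by
    apply Finset.sum_le_sum
    intro j hj
    simp only [mem_range] at hj
    have hja : j ≤ a := by omega
    have h1' : binomPMF n p j ≤ binomPMF n p j * exp (t * (a - j)) := by
      nth_rewrite 1 [← mul_one (binomPMF n p j)]
      apply mul_le_mul_of_nonneg_left _ (binomPMF_nonneg h0 h1)
      rw [← Real.exp_zero]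
      apply Real.exp_le_exp.mpr
      have : (j:ℝ) ≤ a := by exact_mod_cast hja
      nlinarith
    refine h1'.trans (le_of_eq ?_)
    unfold binomPMF
    rw [mul_pow, ← Real.exp_nat_mul]
    rw [show t * ((a:ℝ) - j) = (j:ℝ)*(-t) + t*a by ring, Real.exp_add]
    ring
  have step2 : ∑ j ∈ range (a+1), (n.choose j : ℝ) * (p * exp (-t)) ^ j * (1-p) ^ (n-j) * exp (t*a)
      ≤ (p * exp (-t) + (1-p)) ^ n * exp (t*a) := by
    rw [← Finset.sum_mul, ← sum_tilted n (p * exp (-t)) (1-p)]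
    apply mul_le_mul_of_nonneg_right _ (Real.exp_pos _).le
    rcases le_or_gt (a+1) (n+1) with hc | hc
    · apply Finset.sum_le_sum_of_subset_of_nonneg
      · exact Finset.range_subset_range.mpr hc
      · intro j _ _
        have h2 : (0:ℝ) ≤ p * exp (-t) := by positivity
        positivity
    · rw [← Finset.sum_subset (Finset.range_subset_range.mpr hc.le)]
      intro j _ hj
      simp only [mem_range] at hj
      have : n < j := by omega
      rw [Nat.choose_eq_zero_of_lt this]
      simp
  refine step1.trans (step2.trans ?_)
  have hbase : p * exp (-t) + (1 - p) ≤ exp (p * (exp (-t) - 1)) := by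
    have := Real.add_one_le_exp (p * (exp (-t) - 1))
    linarith
  have hbase0 : (0:ℝ) ≤ p * exp (-t) + (1 - p) := by
    have := Real.exp_pos (-t)
    nlinarith
  calc (p * exp (-t) + (1-p)) ^ n * exp (t*a)
      ≤ exp (p * (exp (-t) - 1)) ^ n * exp (t*a) := by
        apply mul_le_mul_of_nonneg_right _ (Real.exp_pos _).le
        exact pow_le_pow_left₀ hbase0 hbase n
    _ = exp (p * n * (exp (-t) - 1) + t * a) := by
        rw [← Real.exp_nat_mul, ← Real.exp_add]
        congr 1; ring

lemma reflect_sum (n c : ℕ) (p : ℝ) :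
    ∑ j ∈ Icc (c+1) n, binomPMF n p j = ∑ i ∈ range (n - c), binomPMF n (1-p) i := by
  apply Finset.sum_nbij' (fun j => n - j) (fun i => n - i)
  · intro a ha; simp only [mem_Icc] at ha; simp only [mem_range]; omega
  · intro a ha; simp only [mem_range] at ha; simp only [mem_Icc]; omega
  · intro a ha; simp only [mem_Icc] at ha; omega
  · intro a ha; simp only [mem_range] at ha; omega
  · intro a ha
    simp only [mem_Icc] at ha
    unfold binomPMF
    rw [Nat.choose_symm ha.2]
    rw [show n - (n - a) = a by omega]
    ring_nf

lemma exp_neg_quad (t : ℝ) (ht : 0 ≤ t) : exp (-t) ≤ 1 - t + t^2 := by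
  have h1 : exp (-t) * (1 + t) ≤ 1 := by
    have := Real.add_one_le_exp t
    have h2 : exp (-t) * exp t = 1 := by rw [← Real.exp_add]; simp
    calc exp (-t) * (1 + t) ≤ exp (-t) * exp t := by
          apply mul_le_mul_of_nonneg_left _ (Real.exp_pos _).le
          linarith
      _ = 1 := h2
  nlinarith [Real.exp_pos (-t), sq_nonneg t, sq_nonneg (t*t)]

lemma exp_quad (t : ℝ) (ht : 0 ≤ t) (ht2 : t ≤ 1/2) : exp t ≤ 1 + t + 2*t^2 := by
  have h1 : exp t * (1 - t) ≤ 1 := by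
    have := Real.add_one_le_exp (-t)
    have h2 : exp t * exp (-t) = 1 := by rw [← Real.exp_add]; simp
    calc exp t * (1 - t) ≤ exp t * exp (-t) := by
          apply mul_le_mul_of_nonneg_left _ (Real.exp_pos _).le
          linarith
      _ = 1 := h2
  nlinarith [Real.exp_pos t]

lemma lbound_mem_le {n : ℕ} {p : ℝ} (h0 : 0 ≤ p) (h1 : p ≤ 1) (hn : 2 ≤ n) {c : ℕ}
    (hc : prLT n p c ≤ (n:ℝ)^(-(5.33:ℝ))) : c ≤ Lbound n p := by
  have hbdd : BddAbove {c : ℕ | prLT n p c ≤ (n:ℝ)^(-(5.33:ℝ))} := by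
    refine ⟨n, fun b hb => ?_⟩
    simp only [Set.mem_setOf_eq] at hb
    by_contra hbn
    push_neg at hbn
    have h1b : prLT n p (n+1) ≤ prLT n p b := by
      apply Finset.sum_le_sum_of_subset_of_nonneg (Finset.range_subset_range.mpr (by omega))
      exact fun j _ _ => binomPMF_nonneg h0 h1
    have htot : prLT n p (n+1) = 1 := by
      unfold prLT binomPMF
      rw [sum_tilted n p (1-p)]
      norm_num
    have hlt1 : (n:ℝ)^(-(5.33:ℝ)) < 1 := by
      apply Real.rpow_lt_one_of_one_lt_of_neg
      · exact_mod_cast by omega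
      · norm_num
    linarith
  exact le_csSup hbdd hc


lemma lem22 (x l : ℝ) (hl : 13 ≤ l) (hx : 8200 * l ≤ x) : 22*(x*l) ≤ (0.052*x)^2 := by
  have hx0 : 0 ≤ x := by linarith
  have h := mul_le_mul_of_nonneg_right hx hx0
  nlinarith [h]

lemma lem43 (x l : ℝ) (hl : 13 ≤ l) (hx : 8200 * l ≤ x) : 43*(x*l) ≤ (0.0725*x)^2 := by
  have hx0 : 0 ≤ x := by linarith
  have h := mul_le_mul_of_nonneg_right hx hx0
  nlinarith [h]

lemma le_of_sq_le_sq' (x y : ℝ) (hx : 0 ≤ x) (hy : 0 ≤ y) (hsq : x^2 ≤ y^2) : x ≤ y := by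
  nlinarith

lemma exp11_le : Real.exp (1.1:ℝ) ≤ 26.4 := by
  have h1 : Real.exp (1.1:ℝ) ≤ Real.exp 2 := by
    apply Real.exp_le_exp.mpr; norm_num
  have h2 : Real.exp (2:ℝ) = Real.exp 1 * Real.exp 1 := by rw [← Real.exp_add]; norm_num
  nlinarith [Real.exp_one_lt_d9, Real.exp_pos 1]

lemma lem_sq_mono (a b : ℝ) (ha : 0 ≤ a) (hb : 0 ≤ b) : a^2 ≤ (a+b)^2 := by nlinarith

lemma lem_caseA (m l s : ℝ) (hm : 0 < m) (hl : 0 ≤ l) (hs : 43*(m*l) ≤ s^2) :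
    -(s^2)/(8*m) ≤ -(5.33*l) := by
  rw [div_le_iff₀ (by linarith : (0:ℝ) < 8*m)]
  nlinarith [mul_nonneg hm.le hl]

set_option maxHeartbeats 1600000 in

/-- Key technical lemma: let `n ≥ 10^6`, `d_t ~ Bin(n, p_t)` with
`ξ_t = min(μ_t, n−μ_t) ≥ 8200·ln n`, `d_k ~ Bin(n, p_k)` with `μ_k ≤ μ_t`,
`ℓ ∈ {0,1,2}`, and let `h` be an integer with `h ∈ Z_t` and `h − 2 ∈ Z_k`. Then
`Pr[d_k = h − ℓ] ≤ 264·e·√(ln n / ξ_t) · Pr[d_k > h]`. -/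
theorem stmt_9 (n : ℕ) (hn : 10 ^ 6 ≤ n) (pt pk : ℝ)
    (ht0 : 0 ≤ pt) (ht1 : pt ≤ 1) (hk0 : 0 ≤ pk) (hk1 : pk ≤ 1)
    (hξt : 8200 * Real.log n ≤ min (pt * n) ((n : ℝ) - pt * n))
    (hμ : pk * n ≤ pt * n)
    (ℓ : ℕ) (hℓ : ℓ ≤ 2) (h : ℕ)
    (hZt : Lbound n pt ≤ h ∧ h ≤ Ubound n pt)
    (hZk : (Lbound n pk : ℤ) ≤ (h : ℤ) - 2 ∧ (h : ℤ) - 2 ≤ (Ubound n pk : ℤ)) :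
    binomPMF n pk (h - ℓ)
      ≤ 264 * Real.exp 1 * Real.sqrt (Real.log n / min (pt * n) ((n : ℝ) - pt * n))
          * prGT n pk h := by
  classical
  set N : ℝ := (n : ℝ) with hN_def
  clear_value N
  have hN : (1000000:ℝ) ≤ N := by
    rw [hN_def]; exact_mod_cast hn
  have hNpos : (0:ℝ) < N := by linarith
  set L : ℝ := Real.log N with hL_def
  clear_value L
  have hL13 : (13:ℝ) ≤ L := by
    rw [hL_def, Real.le_log_iff_exp_le hNpos]
    have h1 : Real.exp (13:ℝ) = Real.exp 1 ^ (13:ℕ) := by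
      rw [Real.exp_one_pow]; norm_num
    have h2 : Real.exp 1 ^ (13:ℕ) ≤ (2.7182818286:ℝ) ^ (13:ℕ) :=
      pow_le_pow_left₀ (Real.exp_pos 1).le Real.exp_one_lt_d9.le 13
    have h3 : (2.7182818286:ℝ) ^ (13:ℕ) ≤ 1000000 := by norm_num
    linarith
  have hLpos : (0:ℝ) < L := by linarith
  set μt : ℝ := pt * N with hμt_def
  clear_value μt
  set νt : ℝ := N - μt with hνt_def
  clear_value νt
  set ξt : ℝ := min μt νt with hξt_def
  clear_value ξt
  have hξ : 8200 * L ≤ ξt := hξt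
  have hξpos : 0 < ξt := by linarith
  have hμt_ge : ξt ≤ μt := by rw [hξt_def]; exact min_le_left _ _
  have hνt_ge : ξt ≤ νt := by rw [hξt_def]; exact min_le_right _ _
  have hμt_pos : 0 < μt := lt_of_lt_of_le hξpos hμt_ge
  have hνt_pos : 0 < νt := lt_of_lt_of_le hξpos hνt_ge
  set μk : ℝ := pk * N with hμk_def
  clear_value μk
  set νk : ℝ := N - μk with hνk_def
  clear_value νk
  have hμk_le : μk ≤ μt := hμ
  have hνk_ge : νt ≤ νk := by rw [hνk_def, hνt_def]; linarith
  have hνk_pos : 0 < νk := lt_of_lt_of_le hνt_pos hνk_ge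
  have hμk0 : 0 ≤ μk := by rw [hμk_def]; positivity
  have heps : (N:ℝ) ^ (-(5.33:ℝ)) = Real.exp (-(5.33 * L)) := by
    rw [Real.rpow_def_of_pos hNpos]
    congr 1; rw [hL_def]; ring
  have heps_pos : (0:ℝ) < (N:ℝ) ^ (-(5.33:ℝ)) := Real.rpow_pos_of_pos hNpos _
  -- sqrt helper
  have sqrt_le_of_sq : ∀ x y : ℝ, 0 ≤ y → x ≤ y^2 → Real.sqrt x ≤ y := by
    intro x y hy hxy
    calc Real.sqrt x ≤ Real.sqrt (y^2) := Real.sqrt_le_sqrt hxy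
      _ = y := Real.sqrt_sq hy
  ------------------------------------------------------------------
  -- Lower bound on h : μt - s0 ≤ h
  ------------------------------------------------------------------
  set s0 : ℝ := Real.sqrt (22*(μt*L)) with hs0_def
  clear_value s0
  have hs0_nonneg : 0 ≤ s0 := by rw [hs0_def]; exact Real.sqrt_nonneg _
  have hμtL_pos : (0:ℝ) < μt * L := mul_pos hμt_pos hLpos
  have hs0_sq : s0^2 = 22*(μt*L) := by
    rw [hs0_def]; exact Real.sq_sqrt (by linarith)
  have hs0_le : s0 ≤ 0.052 * μt := by
    rw [hs0_def]
    apply sqrt_le_of_sq _ _ (by linarith)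
    exact lem22 μt L hL13 (by linarith)
  have hh_low : μt - s0 ≤ (h:ℝ) := by
    set c0 : ℕ := ⌈μt - s0⌉₊ with hc0_def
    clear_value c0
    have hc0_pos : 0 < μt - s0 := by linarith
    have hc0_ge1 : 1 ≤ c0 := by rw [hc0_def]; exact Nat.one_le_ceil_iff.mpr hc0_pos
    have hc0_le : prLT n pt c0 ≤ (N:ℝ) ^ (-(5.33:ℝ)) := by
      obtain ⟨t, ht_def⟩ : ∃ t:ℝ, t = s0/(2*μt) := ⟨_, rfl⟩
      have hs0_pos : 0 < s0 := by
        rw [hs0_def]; exact Real.sqrt_pos.mpr (by linarith)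
      have ht_pos : 0 < t := by
        rw [ht_def]; exact div_pos hs0_pos (by linarith)
      set a : ℕ := c0 - 1 with ha_def
      clear_value a
      have ha_eq : c0 = a + 1 := by omega
      have haR : (a:ℝ) ≤ μt - s0 := by
        have h1 : (c0:ℝ) < (μt - s0) + 1 := by
          rw [hc0_def]; exact Nat.ceil_lt_add_one hc0_pos.le
        have h2 : (a:ℝ) = (c0:ℝ) - 1 := by
          rw [ha_def]; push_cast [hc0_ge1]; ring
        linarith
      have hb := mgf_lb n a pt t ht0 ht1 ht_pos.le
      have hexp := exp_neg_quad t ht_pos.le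
      have hgoal : prLT n pt c0 = ∑ j ∈ range (a+1), binomPMF n pt j := by
        rw [prLT, ha_eq]
      rw [hgoal, heps]
      refine le_trans hb (Real.exp_le_exp.mpr ?_)
      have hmu : pt * (n:ℝ) = μt := by rw [hμt_def, hN_def]
      rw [hmu]
      have h1 : μt * (Real.exp (-t) - 1) ≤ μt * (-t + t^2) :=
        mul_le_mul_of_nonneg_left (by linarith) hμt_pos.le
      have h2 : t * (a:ℝ) ≤ t * (μt - s0) :=
        mul_le_mul_of_nonneg_left haR ht_pos.le
      have h3 : μt * (-t + t^2) + t * (μt - s0) = -(s0^2)/(4*μt) := by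
        rw [ht_def]; field_simp; ring
      have h4 : -(s0^2)/(4*μt) = -(5.5*L) := by
        rw [hs0_sq]; field_simp; ring
      linarith
    have hLb : c0 ≤ Lbound n pt := by
      apply lbound_mem_le ht0 ht1 (by omega)
      rw [hN_def] at hc0_le; exact hc0_le
    have h1 : c0 ≤ h := le_trans hLb hZt.1
    calc μt - s0 ≤ (c0:ℝ) := by rw [hc0_def]; exact Nat.le_ceil _
      _ ≤ (h:ℝ) := by exact_mod_cast h1
  ------------------------------------------------------------------
  -- Upper bound on h
  ------------------------------------------------------------------
  set ξk : ℝ := min μk νk with hξk_def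
  clear_value ξk
  have hξk_μk : ξk ≤ μk := by rw [hξk_def]; exact min_le_left _ _
  have hξk_νk : ξk ≤ νk := by rw [hξk_def]; exact min_le_right _ _
  have hξk0 : 0 ≤ ξk := by rw [hξk_def]; exact le_min hμk0 hνk_pos.le
  have hU : (h:ℝ) ≤ μk + Real.sqrt (43*(ξk*L)) + 33*L + 3 := by
    have hfromU : ∀ c : ℕ, prGT n pk c ≤ (N:ℝ) ^ (-(5.33:ℝ)) → (h:ℝ) ≤ (c:ℝ) + 2 := by
      intro c hc
      have hUb : Ubound n pk ≤ c := by
        apply Nat.sInf_le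
        rw [hN_def] at hc; exact hc
      have h2 : (h:ℤ) - 2 ≤ (c:ℤ) := le_trans hZk.2 (by exact_mod_cast hUb)
      have h3 : h ≤ c + 2 := by omega
      exact_mod_cast h3
    have h33 : (0:ℝ) ≤ 33 * L := by linarith
    rcases le_total νk μk with hcase | hcase
    · -- ξk = νk ; reflected lower tail
      have hξk_eq : ξk = νk := by rw [hξk_def]; exact min_eq_right hcase
      set s1 : ℝ := Real.sqrt (22*(νk*L)) with hs1_def
      clear_value s1
      have hs1_nonneg : 0 ≤ s1 := by rw [hs1_def]; exact Real.sqrt_nonneg _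
      have hνkL_pos : (0:ℝ) < νk * L := mul_pos hνk_pos hLpos
      have hs1_sq : s1^2 = 22*(νk*L) := by
        rw [hs1_def]; exact Real.sq_sqrt (by linarith)
      have hs1_le : s1 ≤ 0.052 * νk := by
        rw [hs1_def]
        apply sqrt_le_of_sq _ _ (by linarith)
        exact lem22 νk L hL13 (by linarith)
      set c1 : ℕ := ⌈μk + s1⌉₊ with hc1_def
      clear_value c1
      have hc1_len : c1 ≤ n := by
        rw [hc1_def]
        apply Nat.ceil_le.mpr
        rw [← hN_def]
        linarith
      have hc1_ge : μk + s1 ≤ (c1:ℝ) := by rw [hc1_def]; exact Nat.le_ceil _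
      have hc1_lt : (c1:ℝ) < μk + s1 + 1 := by
        rw [hc1_def]; exact Nat.ceil_lt_add_one (by linarith)
      have hc1_tail : prGT n pk c1 ≤ (N:ℝ) ^ (-(5.33:ℝ)) := by
        unfold prGT
        rw [reflect_sum n c1 pk]
        rcases Nat.eq_zero_or_pos (n - c1) with hz | hpos
        · rw [hz]; simp only [Finset.range_zero, Finset.sum_empty]
          exact heps_pos.le
        · set a : ℕ := n - c1 - 1 with ha_def
          have ha_eq : n - c1 = a + 1 := by omega
          obtain ⟨t, ht_def⟩ : ∃ t:ℝ, t = s1/(2*νk) := ⟨_, rfl⟩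
          have hs1_pos : 0 < s1 := by
            rw [hs1_def]
            exact Real.sqrt_pos.mpr (by linarith)
          have ht_pos : 0 < t := by
            rw [ht_def]; exact div_pos hs1_pos (by linarith)
          have hb := mgf_lb n a (1-pk) t (by linarith) (by linarith) ht_pos.le
          have hmu : (1-pk) * (n:ℝ) = νk := by
            rw [← hN_def, hνk_def, hμk_def]; ring
          rw [hmu] at hb
          have haR : (a:ℝ) ≤ νk - s1 - 1 := by
            have hac : a + c1 + 1 = n := by omega
            have h1 : (a:ℝ) + c1 + 1 = N := by
              rw [hN_def]; exact_mod_cast congrArg (Nat.cast : ℕ → ℝ) hac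
            rw [hνk_def]
            linarith
          rw [ha_eq, heps]
          refine le_trans hb (Real.exp_le_exp.mpr ?_)
          have hexp := exp_neg_quad t ht_pos.le
          have h1 : νk * (Real.exp (-t) - 1) ≤ νk * (-t + t^2) :=
            mul_le_mul_of_nonneg_left (by linarith) hνk_pos.le
          have h2 : t * (a:ℝ) ≤ t * (νk - s1) := by
            apply mul_le_mul_of_nonneg_left _ ht_pos.le
            linarith
          have h3 : νk * (-t + t^2) + t * (νk - s1) = -(s1^2)/(4*νk) := by
            rw [ht_def]; field_simp; ring
          have h4 : -(s1^2)/(4*νk) = -(5.5*L) := by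
            rw [hs1_sq]; field_simp; ring
          linarith only [h1, h2, h3, h4, hL13]
      have hh3 := hfromU c1 hc1_tail
      have hs_le : s1 ≤ Real.sqrt (43*(ξk*L)) := by
        rw [hs1_def, hξk_eq]
        apply Real.sqrt_le_sqrt
        have hνkL0 : (0:ℝ) ≤ νk*L := mul_nonneg hνk_pos.le hLpos.le
        linarith
      linarith
    · -- ξk = μk ; direct upper tail
      have hξk_eq : ξk = μk := by rw [hξk_def]; exact min_eq_left hcase
      set s2 : ℝ := Real.sqrt (43*(μk*L)) + 33*L with hs2_def
      clear_value s2
      have hsq_nonneg : 0 ≤ Real.sqrt (43*(μk*L)) := Real.sqrt_nonneg _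
      have hs2_ge : 33*L ≤ s2 := by rw [hs2_def]; linarith
      have hs2_nonneg : 0 ≤ s2 := by linarith
      have hs2_sq : 43*(μk*L) ≤ s2^2 := by
        rw [hs2_def]
        calc 43*(μk*L) = Real.sqrt (43*(μk*L))^2 := by
              rw [Real.sq_sqrt (by linarith [mul_nonneg hμk0 hLpos.le] : (0:ℝ) ≤ 43*(μk*L))]
          _ ≤ (Real.sqrt (43*(μk*L)) + 33*L)^2 := lem_sq_mono _ _ hsq_nonneg h33
      set c2 : ℕ := ⌈μk + s2⌉₊ with hc2_def
      clear_value c2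
      have hc2_ge : μk + s2 ≤ (c2:ℝ) := by rw [hc2_def]; exact Nat.le_ceil _
      have hc2_lt : (c2:ℝ) < μk + s2 + 1 := by
        rw [hc2_def]; exact Nat.ceil_lt_add_one (by linarith)
      have hc2_tail : prGT n pk c2 ≤ (N:ℝ) ^ (-(5.33:ℝ)) := by
        rcases le_or_gt s2 (2*μk) with hA | hB
        · have hμk_pos : (0:ℝ) < μk := by linarith
          obtain ⟨t, ht_def⟩ : ∃ t:ℝ, t = s2/(4*μk) := ⟨_, rfl⟩
          have ht_pos : 0 < t := by
            rw [ht_def]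
            apply div_pos _ (by linarith)
            linarith
          have ht_half : t ≤ 1/2 := by
            rw [ht_def, div_le_iff₀ (by linarith : (0:ℝ) < 4*μk)]
            linarith
          have hb := mgf_ub n (c2+1) pk t hk0 hk1 ht_pos.le
          have hmu : pk * (n:ℝ) = μk := by rw [← hN_def, hμk_def]
          rw [hmu] at hb
          push_cast at hb
          unfold prGT
          rw [heps]
          refine le_trans hb (Real.exp_le_exp.mpr ?_)
          have hexp := exp_quad t ht_pos.le ht_half
          have h1 : μk * (Real.exp t - 1) ≤ μk * (t + 2*t^2) :=
            mul_le_mul_of_nonneg_left (by linarith) hμk_pos.le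
          have h2 : t * (μk + s2) ≤ t * ((c2:ℝ)+1) := by
            apply mul_le_mul_of_nonneg_left _ ht_pos.le
            linarith
          have h3 : μk * (t + 2*t^2) - t * (μk + s2) = -(s2^2)/(8*μk) := by
            rw [ht_def]; field_simp; ring
          have h4 : -(s2^2)/(8*μk) ≤ -(5.33*L) := lem_caseA μk L s2 hμk_pos hLpos.le hs2_sq
          linarith only [h1, h2, h3, h4]
        · have hb := mgf_ub n (c2+1) pk (1/2) hk0 hk1 (by norm_num)
          have hmu : pk * (n:ℝ) = μk := by rw [← hN_def, hμk_def]
          rw [hmu] at hb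
          push_cast at hb
          unfold prGT
          rw [heps]
          refine le_trans hb (Real.exp_le_exp.mpr ?_)
          have hexp := exp_quad (1/2) (by norm_num) (by norm_num)
          have he2 : Real.exp (1/2:ℝ) - 1 ≤ 1 := by norm_num at hexp; linarith
          have h1 : μk * (Real.exp (1/2:ℝ) - 1) ≤ μk * 1 :=
            mul_le_mul_of_nonneg_left he2 hμk0
          have h2 : (1/2:ℝ) * (μk + s2) ≤ (1/2:ℝ) * ((c2:ℝ)+1) := by
            apply mul_le_mul_of_nonneg_left _ (by norm_num)
            linarith
          linarith
      have hh3 := hfromU c2 hc2_tail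
      rw [hξk_eq]
      rw [hs2_def] at hc2_lt
      linarith
  ------------------------------------------------------------------
  -- μk is close to μt
  ------------------------------------------------------------------
  have hξkL_le : ξk * L ≤ μt * L :=
    mul_le_mul_of_nonneg_right (le_trans hξk_μk hμk_le) hLpos.le
  have hsqrt43t : Real.sqrt (43*(ξk*L)) ≤ 0.0725*μt := by
    apply sqrt_le_of_sq _ _ (by linarith)
    calc 43*(ξk*L) ≤ 43*(μt*L) := by linarith
      _ ≤ (0.0725*μt)^2 := lem43 μt L hL13 (by linarith)
  have hμk_low : 0.87*μt ≤ μk := by linarith [hh_low, hU, hs0_le, hsqrt43t]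
  have hμk_pos : 0 < μk := by linarith
  have hξk_low : 0.87*ξt ≤ ξk := by
    rw [hξk_def]
    apply le_min
    · linarith
    · linarith
  ------------------------------------------------------------------
  -- window setup
  ------------------------------------------------------------------
  have hξkL_pos : (0:ℝ) < ξk * L := mul_pos (by linarith) hLpos
  have hξtL_pos : (0:ℝ) < ξt * L := mul_pos hξpos hLpos
  set B : ℝ := Real.sqrt (ξk*L) with hB_def
  clear_value B
  have hB_sq : B^2 = ξk*L := by rw [hB_def]; exact Real.sq_sqrt hξkL_pos.le
  have hB_pos : 0 < B := by rw [hB_def]; exact Real.sqrt_pos.mpr hξkL_pos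
  set A : ℝ := Real.sqrt (ξt*L) with hA_def
  clear_value A
  have hA_sq : A^2 = ξt*L := by rw [hA_def]; exact Real.sq_sqrt hξtL_pos.le
  have hA_pos : 0 < A := by rw [hA_def]; exact Real.sqrt_pos.mpr hξtL_pos
  have hBA : 0.93*A ≤ B := by
    have h1 : (0.93:ℝ)*A = Real.sqrt (0.8649*(ξt*L)) := by
      rw [hA_def, show (0.8649:ℝ)*(ξt*L) = 0.93^2*(ξt*L) by norm_num,
        Real.sqrt_mul (by positivity) (ξt*L), Real.sqrt_sq (by norm_num)]
    rw [h1, hB_def]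
    apply Real.sqrt_le_sqrt
    have h2 : (0:ℝ) ≤ (ξk - 0.87*ξt) * L := mul_nonneg (by linarith) hLpos.le
    linarith [hξtL_pos, h2]
  have hB84 : 84.4*L ≤ B := by
    have h1 : (84.4*L)^2 ≤ B^2 := by
      have h2 : (0:ℝ) ≤ (ξk - 7134*L) * L := by
        apply mul_nonneg _ hLpos.le
        linarith
      linarith [h2, hB_sq]
    exact le_of_sq_le_sq' _ _ (by linarith) hB_pos.le h1
  have hB13 : (1097:ℝ) ≤ B := by linarith [hB84, hL13]
  set w : ℕ := ⌈A/(10*L)⌉₊ with hw_def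
  clear_value w
  have hw_lb : A/(10*L) ≤ (w:ℝ) := by rw [hw_def]; exact Nat.le_ceil _
  have hw_ub : (w:ℝ) ≤ A/(10*L) + 1 := by
    rw [hw_def]
    exact (Nat.ceil_lt_add_one (le_of_lt (div_pos hA_pos (by linarith)))).le
  have hw_pos : 0 < w := by
    rw [hw_def]; exact Nat.ceil_pos.mpr (div_pos hA_pos (by linarith))
  have hAB' : A ≤ 1.08*B := by linarith
  have hwB : (w:ℝ) ≤ 0.0093*B := by
    have h1 : A/(10*L) ≤ A/130 :=
      div_le_div_of_nonneg_left hA_pos.le (by norm_num) (by linarith)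
    have h2 : A/130 ≤ 1.08*B/130 := by linarith
    linarith
  set D : ℝ := Real.sqrt (43*(ξk*L)) + 33*L + 3 + (w:ℝ) with hD_def
  clear_value D
  have hs43B : Real.sqrt (43*(ξk*L)) ≤ 6.56*B := by
    apply sqrt_le_of_sq _ _ (by linarith)
    linarith [hB_sq, hξkL_pos]
  have hsqrt43_nonneg : 0 ≤ Real.sqrt (43*(ξk*L)) := Real.sqrt_nonneg _
  have hw_cast0 : (0:ℝ) ≤ (w:ℝ) := Nat.cast_nonneg _
  have hD3 : 3 ≤ D := by rw [hD_def]; linarith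
  have hD7 : D ≤ 7*B := by rw [hD_def]; linarith
  have h84B : 84.4*B ≤ ξk := by
    have h1 : B*(84.4*L) ≤ B*B := mul_le_mul_of_nonneg_left hB84 hB_pos.le
    have h2 : (84.4*B)*L ≤ ξk*L := by
      have h3 : B*B = ξk*L := by rw [← hB_sq]; ring
      linarith [h1, h3]
    exact le_of_mul_le_mul_right h2 hLpos
  have hDξ : D ≤ 0.083*ξk := by linarith
  have hνkD : 0 < νk - D := by linarith
  have hhwD : (h:ℝ) + (w:ℝ) ≤ μk + D := by rw [hD_def]; linarith [hU]
  have hhwn : h + w ≤ n := by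
    have hr : ((h+w:ℕ):ℝ) < (n:ℝ) := by
      push_cast
      rw [← hN_def]
      linarith
    have := Nat.cast_lt.mp hr
    omega
  have hh2 : 2 ≤ h := by
    have hμt81 : (106600:ℝ) ≤ μt := by linarith
    have h2R : (2:ℝ) < (h:ℝ) := by linarith
    exact_mod_cast h2R.le
  ------------------------------------------------------------------
  -- the ratio γ and the pointwise step bound
  ------------------------------------------------------------------
  have hνk_ne : νk ≠ 0 := ne_of_gt hνk_pos
  have hN_ne : N ≠ 0 := ne_of_gt hNpos
  have hνkD_ne : νk - D ≠ 0 := ne_of_gt hνkD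
  have hden_pos : 0 < νk*(μk + D + 1) := mul_pos hνk_pos (by linarith)
  have hden_ne : μk + D + 1 ≠ 0 := by intro hc; rw [hc] at hden_pos; simp at hden_pos
  have hμk_ne : μk ≠ 0 := ne_of_gt hμk_pos
  set γ : ℝ := (μk*(νk - D))/(νk*(μk + D + 1)) with hγ_def
  clear_value γ
  have hγ_pos : 0 < γ := by
    rw [hγ_def]
    exact div_pos (mul_pos hμk_pos hνkD) hden_pos
  have hγ_le1 : γ ≤ 1 := by
    rw [hγ_def, div_le_one hden_pos]
    have h1 : (0:ℝ) ≤ μk*D := mul_nonneg hμk_pos.le (by linarith)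
    have h2 : (0:ℝ) ≤ νk*D := mul_nonneg hνk_pos.le (by linarith)
    linarith [h1, h2, hνk_pos]
  have hq_pos : 0 < 1 - pk := by
    have h1 : νk = (1-pk)*N := by rw [hνk_def, hμk_def]; ring
    by_contra hc
    push_neg at hc
    have h2 : (1-pk)*N ≤ 0*N := mul_le_mul_of_nonneg_right hc hNpos.le
    rw [zero_mul] at h2
    linarith [h1, h2, hνk_pos]
  have hstep : ∀ i : ℕ, i < h + w → γ * binomPMF n pk i ≤ binomPMF n pk (i+1) := by
    intro i hi
    have hin : i < n := lt_of_lt_of_le hi hhwn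
    have hiw : (i:ℝ) + 1 ≤ (h:ℝ) + (w:ℝ) := by
      have : ((i+1:ℕ):ℝ) ≤ ((h+w:ℕ):ℝ) := Nat.cast_le.mpr hi
      push_cast at this
      linarith
    have hiR : (i:ℝ) + 1 ≤ μk + D := le_trans hiw hhwD
    have hNi : νk - D ≤ (n:ℝ) - i := by
      rw [← hN_def]
      linarith [hνk_def]
    have hkey : γ * (((i:ℝ)+1) * (1-pk)) ≤ pk * ((n:ℝ) - i) := by
      have hγi : γ * (((i:ℝ)+1)*(1-pk)) ≤ γ * ((μk+D+1)*(1-pk)) := by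
        apply mul_le_mul_of_nonneg_left _ hγ_pos.le
        apply mul_le_mul_of_nonneg_right (by linarith) hq_pos.le
      have hγD : γ * ((μk+D+1)*(1-pk)) = μk*(νk-D)*(1-pk)/νk := by
        rw [hγ_def]; field_simp
      have hqN : (1:ℝ)-pk = νk/N := by
        rw [hνk_def, hμk_def]; field_simp
      have h2 : μk*(νk-D)*((1:ℝ)-pk)/νk = μk*(νk-D)/N := by
        rw [hqN]; field_simp
      have h3 : μk*(νk-D)/N ≤ μk*((n:ℝ)-i)/N :=
        (div_le_div_iff_of_pos_right hNpos).mpr (mul_le_mul_of_nonneg_left hNi hμk0)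
      have h4 : μk*((n:ℝ)-i)/N = pk*((n:ℝ)-i) := by
        rw [hμk_def]; field_simp
      calc γ * (((i:ℝ)+1)*(1-pk)) ≤ γ * ((μk+D+1)*(1-pk)) := hγi
        _ = μk*(νk-D)*(1-pk)/νk := hγD
        _ = μk*(νk-D)/N := h2
        _ ≤ μk*((n:ℝ)-i)/N := h3
        _ = pk*((n:ℝ)-i) := h4
    have hq0 : (0:ℝ) ≤ 1 - pk := hq_pos.le
    have hchoose : ((n.choose (i+1)):ℝ) * ((i:ℝ)+1) = ((n.choose i):ℝ) * ((n:ℝ) - i) := by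
      have h0 := Nat.choose_succ_right_eq n i
      have h1 : ((n.choose (i+1) * (i+1) : ℕ) : ℝ) = ((n.choose i * (n - i) : ℕ) : ℝ) := by
        exact_mod_cast congrArg (Nat.cast : ℕ → ℝ) h0
      push_cast [Nat.cast_sub hin.le] at h1
      linarith [h1]
    have hpow : (1-pk)^(n-i) = (1-pk)^(n-(i+1)) * (1-pk) := by
      rw [← pow_succ]
      congr 1
      omega
    have hfac : (0:ℝ) ≤ ((n.choose i):ℝ) * pk^i * (1-pk)^(n-(i+1)) :=
      mul_nonneg (mul_nonneg (Nat.cast_nonneg _) (pow_nonneg hk0 _)) (pow_nonneg hq0 _)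
    have hmul : γ * binomPMF n pk i * ((i:ℝ)+1) ≤ binomPMF n pk (i+1) * ((i:ℝ)+1) := by
      unfold binomPMF
      rw [hpow]
      calc γ * ((n.choose i:ℝ) * pk^i * ((1-pk)^(n-(i+1)) * (1-pk))) * ((i:ℝ)+1)
          = ((n.choose i:ℝ) * pk^i * (1-pk)^(n-(i+1))) * (γ * (((i:ℝ)+1) * (1-pk))) := by ring
        _ ≤ ((n.choose i:ℝ) * pk^i * (1-pk)^(n-(i+1))) * (pk * ((n:ℝ)-i)) :=
            mul_le_mul_of_nonneg_left hkey hfac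
        _ = ((n.choose i:ℝ) * ((n:ℝ)-i)) * (pk^i*pk) * (1-pk)^(n-(i+1)) := by ring
        _ = ((n.choose (i+1):ℝ) * ((i:ℝ)+1)) * (pk^i*pk) * (1-pk)^(n-(i+1)) := by
            rw [hchoose]
        _ = (n.choose (i+1):ℝ) * pk^(i+1) * (1-pk)^(n-(i+1)) * ((i:ℝ)+1) := by
            rw [pow_succ]; ring
    have hpos1 : (0:ℝ) < (i:ℝ)+1 := by positivity
    exact le_of_mul_le_mul_right hmul hpos1
  ------------------------------------------------------------------
  -- chain and window sum
  ------------------------------------------------------------------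
  set m : ℕ := h - ℓ with hm_def
  have hpmf_m0 : 0 ≤ binomPMF n pk m := binomPMF_nonneg hk0 hk1
  have hchain : ∀ i : ℕ, m + i ≤ h + w → γ^i * binomPMF n pk m ≤ binomPMF n pk (m+i) := by
    intro i
    induction i with
    | zero => intro _; simp
    | succ k ih =>
      intro hk
      have h1 : m + k ≤ h + w := by omega
      have h2 : m + k < h + w := by omega
      calc γ^(k+1) * binomPMF n pk m = γ * (γ^k * binomPMF n pk m) := by ring
        _ ≤ γ * binomPMF n pk (m+k) := mul_le_mul_of_nonneg_left (ih h1) hγ_pos.le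
        _ ≤ binomPMF n pk (m+k+1) := hstep (m+k) h2
        _ = binomPMF n pk (m+(k+1)) := rfl
  have hγw : ∀ j ∈ Finset.Icc (h+1) (h+w), γ^(w+2) * binomPMF n pk m ≤ binomPMF n pk j := by
    intro j hj
    rw [Finset.mem_Icc] at hj
    have hjm : m ≤ j := by omega
    have hje : m + (j - m) = j := by omega
    have h1 := hchain (j - m) (by omega)
    rw [hje] at h1
    refine le_trans ?_ h1
    apply mul_le_mul_of_nonneg_right _ hpmf_m0
    apply pow_le_pow_of_le_one hγ_pos.le hγ_le1
    omega
  have hsum : (w:ℝ) * (γ^(w+2) * binomPMF n pk m) ≤ prGT n pk h := by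
    have h1 : ∑ _j ∈ Finset.Icc (h+1) (h+w), (γ^(w+2) * binomPMF n pk m)
        ≤ ∑ j ∈ Finset.Icc (h+1) (h+w), binomPMF n pk j := Finset.sum_le_sum hγw
    rw [Finset.sum_const, Nat.card_Icc] at h1
    have hcard : h + w + 1 - (h+1) = w := by omega
    rw [hcard, nsmul_eq_mul] at h1
    refine le_trans h1 ?_
    unfold prGT
    apply Finset.sum_le_sum_of_subset_of_nonneg
    · exact Finset.Icc_subset_Icc_right hhwn
    · intro j _ _; exact binomPMF_nonneg hk0 hk1
  ------------------------------------------------------------------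
  -- lower bound for γ via exp
  ------------------------------------------------------------------
  set β : ℝ := (D+1)/μk + D/(νk - D) with hβ_def
  clear_value β
  have hβ_nonneg : 0 ≤ β := by
    rw [hβ_def]
    have h1 := div_nonneg (by linarith : (0:ℝ) ≤ D+1) hμk_pos.le
    have h2 := div_nonneg (by linarith : (0:ℝ) ≤ D) hνkD.le
    linarith
  have hγβ : Real.exp (-β) ≤ γ := by
    have e1 : Real.exp (-((D+1)/μk)) ≤ μk/(μk+D+1) := by
      have h1 : (μk+D+1)/μk ≤ Real.exp ((D+1)/μk) := by
        have h2 := Real.add_one_le_exp ((D+1)/μk)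
        have h3 : (μk+D+1)/μk = (D+1)/μk + 1 := by field_simp; ring
        linarith
      rw [Real.exp_neg]
      rw [show μk/(μk+D+1) = ((μk+D+1)/μk)⁻¹ by rw [inv_div]]
      exact inv_anti₀ (div_pos (by linarith) hμk_pos) h1
    have e2 : Real.exp (-(D/(νk-D))) ≤ (νk-D)/νk := by
      have h1 : νk/(νk-D) ≤ Real.exp (D/(νk-D)) := by
        have h2 := Real.add_one_le_exp (D/(νk-D))
        have h3 : νk/(νk-D) = D/(νk-D) + 1 := by field_simp; ring
        linarith
      rw [Real.exp_neg]
      rw [show (νk-D)/νk = (νk/(νk-D))⁻¹ by rw [inv_div]]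
      exact inv_anti₀ (div_pos hνk_pos hνkD) h1
    calc Real.exp (-β) = Real.exp (-((D+1)/μk)) * Real.exp (-(D/(νk-D))) := by
          rw [← Real.exp_add, hβ_def]; ring_nf
      _ ≤ (μk/(μk+D+1)) * ((νk-D)/νk) := by
          apply mul_le_mul e1 e2 (Real.exp_pos _).le
          exact div_nonneg hμk_pos.le (by linarith)
      _ = γ := by rw [hγ_def]; field_simp
  ------------------------------------------------------------------
  -- numeric bound on (w+2)*β
  ------------------------------------------------------------------
  have hξk_pos : (0:ℝ) < ξk := by linarith
  have hβ1 : (D+1)/μk ≤ (7*B+1)/ξk :=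
    div_le_div₀ (by linarith) (by linarith) hξk_pos hξk_μk
  have hβ2 : D/(νk-D) ≤ (7*B)/(0.917*ξk) :=
    div_le_div₀ (by linarith) hD7 (by linarith) (by linarith)
  have hβ3 : (7*B)/(0.917*ξk) ≤ (7.64*B)/ξk := by
    rw [div_le_div_iff₀ (by linarith) hξk_pos]
    have h1 : (0:ℝ) ≤ B*ξk := mul_nonneg hB_pos.le hξk_pos.le
    linarith [h1]
  have hβ4 : (7*B+1)/ξk ≤ (7.02*B)/ξk :=
    (div_le_div_iff_of_pos_right hξk_pos).mpr (by linarith)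
  have hβ5 : β ≤ (14.66*B)/ξk := by
    have hsumeq : (7.02*B)/ξk + (7.64*B)/ξk = (14.66*B)/ξk := by ring
    rw [hβ_def]
    linarith
  have hβ6 : (14.66*B)/ξk = 14.66*(L/B) := by
    rw [show (14.66:ℝ)*(L/B) = (14.66*L)/B by ring]
    rw [div_eq_div_iff hξk_pos.ne' hB_pos.ne']
    linear_combination (14.66:ℝ) * hB_sq
  have hβ7 : β ≤ 14.66*(L/B) := by rw [← hβ6]; exact hβ5
  have hw2 : (w:ℝ)+2 ≤ B/(9.3*L) + 3 := by
    have h1 : A/(10*L) ≤ B/(9.3*L) := by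
      rw [div_le_div_iff₀ (by linarith) (by linarith)]
      have h2 := mul_le_mul_of_nonneg_right hBA hLpos.le
      linarith [h2]
    linarith
  have hX : ((w:ℝ)+2) * β ≤ 2.1 := by
    have h1 : ((w:ℝ)+2) * β ≤ (B/(9.3*L) + 3) * (14.66*(L/B)) := by
      apply mul_le_mul hw2 hβ7 hβ_nonneg
      have := div_nonneg hB_pos.le (by linarith : (0:ℝ) ≤ 9.3*L)
      linarith
    have h2 : (B/(9.3*L) + 3) * (14.66*(L/B)) = 14.66/9.3 + 43.98*(L/B) := by
      field_simp
      ring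
    have h3 : L/B ≤ 1/84.4 := by
      rw [div_le_div_iff₀ hB_pos (by norm_num)]
      linarith
    rw [h2] at h1
    have h4 : 14.66/9.3 + 43.98*(L/B) ≤ 14.66/9.3 + 43.98*(1/84.4) := by linarith
    linarith
  ------------------------------------------------------------------
  -- final assembly
  ------------------------------------------------------------------
  have hsqrtLξ : Real.sqrt (L/ξt) = L/A := by
    have h1 : (L/A)^2 = L/ξt := by
      rw [div_pow, hA_sq, pow_two]
      rw [div_eq_div_iff (ne_of_gt hξtL_pos) hξpos.ne']
      ring
    rw [← h1, Real.sqrt_sq (div_nonneg hLpos.le hA_pos.le)]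
  have hγpow : Real.exp (-(((w:ℝ)+2)*β)) ≤ γ^(w+2) := by
    have h1 : Real.exp (-(((w:ℝ)+2)*β)) = (Real.exp (-β))^(w+2) := by
      rw [← Real.exp_nat_mul]
      congr 1
      push_cast
      ring
    rw [h1]
    exact pow_le_pow_left₀ (Real.exp_pos _).le hγβ _
  have hexp21 : Real.exp (-(2.1:ℝ)) ≤ Real.exp (-(((w:ℝ)+2)*β)) :=
    Real.exp_le_exp.mpr (by linarith)
  have hfinal_pos : (0:ℝ) ≤ 264*Real.exp 1*(L/A) := by positivity
  have hkey2 : 1 ≤ 264*Real.exp 1*(L/A) * ((w:ℝ)*γ^(w+2)) := by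
    have h1 : (A/(10*L))*Real.exp (-(2.1:ℝ)) ≤ (w:ℝ)*γ^(w+2) := by
      apply mul_le_mul hw_lb (le_trans hexp21 hγpow) (Real.exp_pos _).le (Nat.cast_nonneg w)
    have h2 : 264*Real.exp 1*(L/A) * ((A/(10*L))*Real.exp (-(2.1:ℝ)))
        = 26.4*(Real.exp 1*Real.exp (-(2.1:ℝ))) := by
      field_simp
      ring
    have h3 : Real.exp 1*Real.exp (-(2.1:ℝ)) = Real.exp (-(1.1:ℝ)) := by
      rw [← Real.exp_add]; norm_num
    have h4 : 1 ≤ 26.4*Real.exp (-(1.1:ℝ)) := by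
      rw [Real.exp_neg, show (26.4:ℝ)*(Real.exp (1.1:ℝ))⁻¹ = 26.4/Real.exp (1.1:ℝ) by ring]
      rw [one_le_div (Real.exp_pos _)]
      exact exp11_le
    calc (1:ℝ) ≤ 26.4*Real.exp (-(1.1:ℝ)) := h4
      _ = 264*Real.exp 1*(L/A) * ((A/(10*L))*Real.exp (-(2.1:ℝ))) := by rw [h2, h3]
      _ ≤ 264*Real.exp 1*(L/A) * ((w:ℝ)*γ^(w+2)) := mul_le_mul_of_nonneg_left h1 hfinal_pos
  rw [hsqrtLξ]
  calc binomPMF n pk m = 1 * binomPMF n pk m := (one_mul _).symm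
    _ ≤ (264*Real.exp 1*(L/A) * ((w:ℝ)*γ^(w+2))) * binomPMF n pk m :=
        mul_le_mul_of_nonneg_right hkey2 hpmf_m0
    _ = (264*Real.exp 1*(L/A)) * ((w:ℝ)*(γ^(w+2) * binomPMF n pk m)) := by ring
    _ ≤ (264*Real.exp 1*(L/A)) * prGT n pk h := by
        apply mul_le_mul_of_nonneg_left hsum hfinal_pos
    _ = 264*Real.exp 1*(L/A) * prGT n pk h := by ring
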